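/- Let A be an n×n real symmetric positive semidefinite matrix, let t ≥ 0, and let X be a symmetric n²×n² real matrix such that t·X − vec(A)vec(A)^T is positive semidefinite and (A ⊗ A) − X is positive semidefinite. Then rank(A) ≤ t. (In particular, the semidefinite programming relaxation τ_cp^sos(A) of the cp-rank satisfies τ_cp^sos(A) ≥ rank(A) for every completely positive matrix A.) -/

import Mathlib

open Matrix Kronecker

section Aux
variable {n : ℕ}

lemma aux_dot_trace (B D : Matrix (Fin n) (Fin n) ℝ) :
    (fun p : Fin n × Fin n => B p.1 p.2) ⬝ᵥ (fun p : Fin n × Fin n => D p.1 p.2)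
      = Matrix.trace (B * Dᵀ) := by
  simp [dotProduct, Matrix.trace, Matrix.mul_apply, Fintype.sum_prod_type, Matrix.diag]

lemma aux_kron_mulVec (M N C : Matrix (Fin n) (Fin n) ℝ) :
    (M ⊗ₖ N) *ᵥ (fun p : Fin n × Fin n => C p.1 p.2)
      = fun p : Fin n × Fin n => (M * C * Nᵀ) p.1 p.2 := by
  funext p
  simp only [mulVec, dotProduct, Fintype.sum_prod_type, kroneckerMap_apply,
    Matrix.mul_apply, transpose_apply, Finset.sum_mul, Finset.mul_sum]
  rw [Finset.sum_comm]
  apply Finset.sum_congr rfl; intro k _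
  apply Finset.sum_congr rfl; intro l _
  ring

lemma aux_vmv_mulVec (a v : Fin n × Fin n → ℝ) :
    Matrix.vecMulVec a a *ᵥ v = (a ⬝ᵥ v) • a := by
  funext p
  simp [mulVec, dotProduct, vecMulVec_apply, Finset.mul_sum, mul_comm, mul_left_comm]

end Aux

theorem stmt18 {n : ℕ} (A : Matrix (Fin n) (Fin n) ℝ) (hA : A.PosSemidef)
    (t : ℝ) (ht : 0 ≤ t) (X : Matrix (Fin n × Fin n) (Fin n × Fin n) ℝ)
    (hXsymm : X.IsSymm)
    (h1 : (t • X -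
      Matrix.vecMulVec (fun p : Fin n × Fin n => A p.1 p.2)
        (fun p : Fin n × Fin n => A p.1 p.2)).PosSemidef)
    (h2 : ((A ⊗ₖ A) - X).PosSemidef) :
    (A.rank : ℝ) ≤ t := by
  classical
  have hH : A.IsHermitian := hA.1
  set U : Matrix (Fin n) (Fin n) ℝ := (hH.eigenvectorUnitary : Matrix (Fin n) (Fin n) ℝ) with hU
  set μ : Fin n → ℝ := hH.eigenvalues with hμ
  have hUU : star U * U = 1 := (Matrix.mem_unitaryGroup_iff').mp hH.eigenvectorUnitary.2
  have hUU' : U * star U = 1 := (Matrix.mem_unitaryGroup_iff).mp hH.eigenvectorUnitary.2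
  set e : Fin n → ℝ := fun i => if μ i = 0 then 0 else 1 with he
  set B : Matrix (Fin n) (Fin n) ℝ :=
    U * diagonal (fun i => if μ i = 0 then 0 else (μ i)⁻¹) * star U with hB
  have hspec : A = U * diagonal μ * star U := by
    have := hH.spectral_theorem
    simpa using this
  -- A * B = B * A = U * diagonal e * star U
  have hAB : A * B = U * diagonal e * star U := by
    rw [hspec, hB]
    rw [show (U * diagonal μ * star U) * (U * diagonal (fun i => if μ i = 0 then 0 else (μ i)⁻¹) * star U)
        = U * (diagonal μ * (star U * U) * diagonal (fun i => if μ i = 0 then 0 else (μ i)⁻¹)) * star U by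
      noncomm_ring]
    rw [hUU, mul_one, diagonal_mul_diagonal]
    congr 2
    funext i j
    by_cases h : μ i = 0
    · simp [Matrix.diagonal, he, h]
    · simp [Matrix.diagonal, he, h, mul_inv_cancel₀ h]
  have hBA : B * A = U * diagonal e * star U := by
    rw [hspec, hB]
    rw [show (U * diagonal (fun i => if μ i = 0 then 0 else (μ i)⁻¹) * star U) * (U * diagonal μ * star U)
        = U * (diagonal (fun i => if μ i = 0 then 0 else (μ i)⁻¹) * (star U * U) * diagonal μ) * star U by
      noncomm_ring]
    rw [hUU, mul_one, diagonal_mul_diagonal]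
    congr 2
    funext i j
    by_cases h : μ i = 0
    · simp [Matrix.diagonal, he, h]
    · simp [Matrix.diagonal, he, h, inv_mul_cancel₀ h]
  -- symmetry of A and B
  have hAsymm : Aᵀ = A := by
    rw [← conjTranspose_eq_transpose_of_trivial]; exact hH
  have hBsymm : Bᵀ = B := by
    rw [← conjTranspose_eq_transpose_of_trivial, hB]
    simp only [conjTranspose_mul, conjTranspose_conjTranspose, star_eq_conjTranspose]
    rw [diagonal_conjTranspose]
    simp [mul_assoc, star_trivial]
  -- traces
  have htrP : Matrix.trace (U * diagonal e * star U) = ∑ i, e i := by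
    rw [Matrix.trace_mul_cycle, hUU, one_mul, Matrix.trace_diagonal]
  have htrPP : Matrix.trace ((U * diagonal e * star U) * (U * diagonal e * star U)) = ∑ i, e i := by
    rw [show (U * diagonal e * star U) * (U * diagonal e * star U)
        = U * (diagonal e * (star U * U) * diagonal e) * star U by noncomm_ring]
    rw [hUU, mul_one, diagonal_mul_diagonal]
    rw [Matrix.trace_mul_cycle, hUU, one_mul, Matrix.trace_diagonal]
    apply Finset.sum_congr rfl; intro i _
    by_cases h : μ i = 0 <;> simp [he, h]
  -- rank
  have hrank : (A.rank : ℝ) = ∑ i, e i := by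
    rw [hH.rank_eq_card_non_zero_eigs]
    rw [Fintype.card_subtype]
    rw [show (∑ i, e i) = ∑ i, (if μ i ≠ 0 then (1:ℝ) else 0) by
      apply Finset.sum_congr rfl; intro i _; by_cases h : μ i = 0 <;> simp [he, h]]
    rw [Finset.sum_boole]
  -- quadratic forms
  set v : Fin n × Fin n → ℝ := fun p => B p.1 p.2 with hv
  set a : Fin n × Fin n → ℝ := fun p => A p.1 p.2 with ha
  have hav : a ⬝ᵥ v = ∑ i, e i := by
    rw [ha, hv, aux_dot_trace, hBsymm, hAB, htrP]
  have hva : v ⬝ᵥ a = ∑ i, e i := by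
    rw [ha, hv, aux_dot_trace, hAsymm, hBA, htrP]
  have hq2 : v ⬝ᵥ ((A ⊗ₖ A) *ᵥ v) = ∑ i, e i := by
    rw [hv, aux_kron_mulVec, aux_dot_trace]
    rw [show (A * B * Aᵀ)ᵀ = A * Bᵀ * Aᵀ by rw [transpose_mul, transpose_mul, transpose_transpose]; noncomm_ring]
    rw [hBsymm, hAsymm]
    rw [show B * (A * B * A) = (B * A) * (B * A) by noncomm_ring]
    rw [hBA, htrPP]
  have hq1 : v ⬝ᵥ (Matrix.vecMulVec a a *ᵥ v) = (∑ i, e i) * (∑ i, e i) := by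
    rw [aux_vmv_mulVec, dotProduct_smul, hva, smul_eq_mul, hav]
  -- use PSD hypotheses
  have key1 : 0 ≤ t * (v ⬝ᵥ (X *ᵥ v)) - (∑ i, e i) * (∑ i, e i) := by
    have := h1.dotProduct_mulVec_nonneg v
    rw [star_trivial] at this
    rw [sub_mulVec, dotProduct_sub, smul_mulVec, dotProduct_smul] at this
    rw [hq1] at this
    simpa using this
  have key2 : v ⬝ᵥ (X *ᵥ v) ≤ ∑ i, e i := by
    have := h2.dotProduct_mulVec_nonneg v
    rw [star_trivial] at this
    rw [sub_mulVec, dotProduct_sub, hq2] at this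
    linarith
  rw [hrank]
  have hρ0 : (0:ℝ) ≤ ∑ i, e i := by
    rw [← hrank]; positivity
  rcases eq_or_lt_of_le hρ0 with h0 | hpos
  · linarith
  · nlinarith [mul_le_mul_of_nonneg_left key2 ht]
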